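/- (Theorem 1, value-function decrease) Under Assumptions 1 and 2 with ρ > 0 and γ := C/(1−ρ) > 1, let V̄ > 0, ρ_γ := (γ−1)/γ, γ̲ := min{γ, V̄/ε}, N₀ := ⌈max{0, (V̄ − γε)/ε}⌉, and for M ≥ 1 define N_M := N₀ + max{log(γ̲), log(C²ρ^M/(1−ρ^M)), 0}/(log(γ) − log(γ−1)). Then for every integer N > N_M and every x ∈ ℝⁿ with V_{N,M}(x) ≤ V̄, any minimizing input sequence u*(·) for V_{N,M}(x) satisfies V_{N,M}(f(x, u*(0))) ≤ V_{N,M}(x) − ε_{N,M} · ℓ(x, u*(0)), where ε_{N,M} := 1 − C² ρ_γ^{N−N₀} ρ^M/(1−ρ^M) ∈ (0,1]. -/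

import Mathlib

open Finset Filter
open scoped ENNReal

noncomputable section

open scoped Classical

/-- State/input spaces are Euclidean spaces. -/
abbrev Vec (n : ℕ) := EuclideanSpace ℝ (Fin n)

/-- Open-loop state trajectory: `x(0) = x`, `x(k+1) = f(x(k), u(k))`. -/
def traj {n m : ℕ} (f : Vec n → Vec m → Vec n) (x : Vec n) (u : ℕ → Vec m) : ℕ → Vec n
  | 0 => x
  | k + 1 => f (traj f x u k) (u k)

/-- Closed-loop state trajectory under the feedback `κ` (the map `φ_x(·, x)`). -/
def phiX {n m : ℕ} (f : Vec n → Vec m → Vec n) (κ : Vec n → Vec m) (x : Vec n) : ℕ → Vec n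
  | 0 => x
  | k + 1 => f (phiX f κ x k) (κ (phiX f κ x k))

/-- `ℓ_min(x) := inf_{u ∈ U} ℓ(x, u)`. -/
def lmin {n m : ℕ} (ℓ : Vec n → Vec m → ℝ) (Uset : Set (Vec m)) (x : Vec n) : ℝ :=
  sInf ((fun u => ℓ x u) '' Uset)

/-- Finite-tail cost `V_{f,M}(x)`: sum of the stage cost along the κ-closed loop if the
constraints are satisfied along the tail, and `+∞` otherwise (for `M = 0` it equals `0`). -/
def Vtail {n m : ℕ} (f : Vec n → Vec m → Vec n) (κ : Vec n → Vec m)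
    (ℓ : Vec n → Vec m → ℝ) (Z : Set (Vec n × Vec m)) (M : ℕ) (x : Vec n) : ℝ≥0∞ :=
  if ∀ k < M, (phiX f κ x k, κ (phiX f κ x k)) ∈ Z then
    ENNReal.ofReal (∑ k ∈ Finset.range M, ℓ (phiX f κ x k) (κ (phiX f κ x k)))
  else ⊤

/-- Feasibility of the input sequence `u` over horizon `N` from state `x`. -/
def Feasible {n m : ℕ} (f : Vec n → Vec m → Vec n) (Z : Set (Vec n × Vec m))
    (Uset : Set (Vec m)) (N : ℕ) (x : Vec n) (u : ℕ → Vec m) : Prop :=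
  ∀ k < N, u k ∈ Uset ∧ (traj f x u k, u k) ∈ Z

/-- MPC open-loop cost `J_{N,M}` of the input sequence `u` from state `x`. -/
def Jcost {n m : ℕ} (f : Vec n → Vec m → Vec n) (κ : Vec n → Vec m)
    (ℓ : Vec n → Vec m → ℝ) (Z : Set (Vec n × Vec m)) (N M : ℕ) (x : Vec n)
    (u : ℕ → Vec m) : ℝ≥0∞ :=
  ENNReal.ofReal (∑ k ∈ Finset.range N, ℓ (traj f x u k) (u k)) +
    Vtail f κ ℓ Z M (traj f x u N)

/-- MPC value function `V_{N,M}(x)` (equal to `+∞` if the problem is infeasible). -/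
def Vmpc {n m : ℕ} (f : Vec n → Vec m → Vec n) (κ : Vec n → Vec m)
    (ℓ : Vec n → Vec m → ℝ) (Z : Set (Vec n × Vec m)) (Uset : Set (Vec m))
    (N M : ℕ) (x : Vec n) : ℝ≥0∞ :=
  ⨅ (u : ℕ → Vec m) (_ : Feasible f Z Uset N x u), Jcost f κ ℓ Z N M x u

/-- `u` is a minimizing (optimal) input sequence for `V_{N,M}(x)`. -/
def IsMinimizer {n m : ℕ} (f : Vec n → Vec m → Vec n) (κ : Vec n → Vec m)
    (ℓ : Vec n → Vec m → ℝ) (Z : Set (Vec n × Vec m)) (Uset : Set (Vec m))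
    (N M : ℕ) (x : Vec n) (u : ℕ → Vec m) : Prop :=
  Feasible f Z Uset N x u ∧ Vmpc f κ ℓ Z Uset N M x = Jcost f κ ℓ Z N M x u

/-- Infinite-horizon optimal cost `V_{∞,0}(x)`. -/
def Vinf {n m : ℕ} (f : Vec n → Vec m → Vec n) (ℓ : Vec n → Vec m → ℝ)
    (Z : Set (Vec n × Vec m)) (Uset : Set (Vec m)) (x : Vec n) : ℝ≥0∞ :=
  ⨅ (u : ℕ → Vec m) (_ : ∀ k, u k ∈ Uset ∧ (traj f x u k, u k) ∈ Z),
    ∑' k : ℕ, ENNReal.ofReal (ℓ (traj f x u k) (u k))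

/-- Assumption 2 (locally stabilizing controller): exponential decay of the stage
cost along the κ-closed loop and constraint satisfaction, locally (`ℓ_min(x) ≤ ε`). -/
def Assumption2 {n m : ℕ} (f : Vec n → Vec m → Vec n) (κ : Vec n → Vec m)
    (ℓ : Vec n → Vec m → ℝ) (Z : Set (Vec n × Vec m)) (Uset : Set (Vec m))
    (ρ C ε : ℝ) : Prop :=
  ρ ∈ Set.Ico (0 : ℝ) 1 ∧ 1 ≤ C ∧ 0 < ε ∧
    ∀ x : Vec n, lmin ℓ Uset x ≤ ε → ∀ k : ℕ,
      ℓ (phiX f κ x k) (κ (phiX f κ x k)) ≤ C * ρ ^ k * lmin ℓ Uset x ∧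
      (phiX f κ x k, κ (phiX f κ x k)) ∈ Z

/-- A class-`K∞` function: continuous, strictly increasing and unbounded on `[0,∞)`
with `α(0) = 0`. -/
def IsKInfty (α : ℝ → ℝ) : Prop :=
  ContinuousOn α (Set.Ici 0) ∧ StrictMonoOn α (Set.Ici 0) ∧ α 0 = 0 ∧
    Tendsto α atTop atTop

section MPCAux

variable {n m : ℕ}

lemma phiX_add (f : Vec n → Vec m → Vec n) (κ : Vec n → Vec m) (x : Vec n) (j k : ℕ) :
    phiX f κ (phiX f κ x j) k = phiX f κ x (j + k) := by
  induction k with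
  | zero => rfl
  | succ k ih => show f _ _ = f _ _; rw [ih]; rfl

lemma traj_congr (f : Vec n → Vec m → Vec n) (x : Vec n) (u v : ℕ → Vec m) (k : ℕ)
    (h : ∀ j < k, u j = v j) : traj f x u k = traj f x v k := by
  induction k with
  | zero => rfl
  | succ k ih =>
      show f _ _ = f _ _
      rw [ih (fun j hj => h j (Nat.lt_succ_of_lt hj)), h k (Nat.lt_succ_self k)]

lemma traj_shift (f : Vec n → Vec m → Vec n) (x : Vec n) (u : ℕ → Vec m) (k : ℕ) :
    traj f (f x (u 0)) (fun j => u (j + 1)) k = traj f x u (k + 1) := by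
  induction k with
  | zero => rfl
  | succ k ih => show f _ _ = f _ _; rw [ih]

lemma traj_kappa (f : Vec n → Vec m → Vec n) (κ : Vec n → Vec m) (z : Vec n) (k : ℕ) :
    traj f z (fun j => κ (phiX f κ z j)) k = phiX f κ z k := by
  induction k with
  | zero => rfl
  | succ k ih => show f _ _ = f _ _; rw [ih]

lemma traj_concat_left (f : Vec n → Vec m → Vec n) (x : Vec n) (u v : ℕ → Vec m) (k j : ℕ)
    (hj : j ≤ k) : traj f x (fun i => if i < k then u i else v (i - k)) j = traj f x u j :=
  traj_congr f x _ u j (fun i hi => if_pos (lt_of_lt_of_le hi hj))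

lemma traj_concat_right (f : Vec n → Vec m → Vec n) (x : Vec n) (u v : ℕ → Vec m) (k j : ℕ) :
    traj f x (fun i => if i < k then u i else v (i - k)) (k + j) =
      traj f (traj f x u k) v j := by
  induction j with
  | zero => exact traj_concat_left f x u v k k le_rfl
  | succ j ih =>
      show f (traj f x _ (k + j)) _ = f _ _
      rw [ih]
      congr 1
      simp

lemma lmin_nonneg (ℓ : Vec n → Vec m → ℝ) (Uset : Set (Vec m)) (hℓ0 : ∀ x u, 0 ≤ ℓ x u)
    (x : Vec n) : 0 ≤ lmin ℓ Uset x :=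
  Real.sInf_nonneg (by rintro y ⟨u, _, rfl⟩; exact hℓ0 x u)

lemma lmin_le (ℓ : Vec n → Vec m → ℝ) (Uset : Set (Vec m)) (hℓ0 : ∀ x u, 0 ≤ ℓ x u)
    {u : Vec m} (hu : u ∈ Uset) (x : Vec n) : lmin ℓ Uset x ≤ ℓ x u :=
  csInf_le ⟨0, by rintro y ⟨w, _, rfl⟩; exact hℓ0 x w⟩ ⟨u, hu, rfl⟩

lemma geom_sum_le_inv_one_sub {ρ : ℝ} (h0 : 0 ≤ ρ) (h1 : ρ < 1) (t : ℕ) :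
    ∑ k ∈ Finset.range t, ρ ^ k ≤ 1 / (1 - ρ) := by
  have hne : 1 - ρ > 0 := by linarith
  rw [le_div_iff₀ hne]
  have := geom_sum_mul ρ t
  have hpow : 0 ≤ ρ ^ t := pow_nonneg h0 t
  nlinarith [this]

/-- Step 1: local upper bound on the value function via the κ-candidate. -/
lemma vmpc_le_gamma_lmin (f : Vec n → Vec m → Vec n) (κ : Vec n → Vec m)
    (ℓ : Vec n → Vec m → ℝ) (Z : Set (Vec n × Vec m)) (Uset : Set (Vec m))
    {ρ C ε : ℝ} (hA2 : Assumption2 f κ ℓ Z Uset ρ C ε) (hκU : ∀ x, κ x ∈ Uset)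
    (hℓ0 : ∀ x u, 0 ≤ ℓ x u)
    (z : Vec n) (hz : lmin ℓ Uset z ≤ ε) (j M : ℕ) :
    Vmpc f κ ℓ Z Uset j M z ≤ ENNReal.ofReal (C / (1 - ρ) * lmin ℓ Uset z) := by
  obtain ⟨⟨hρ0, hρ1⟩, hC, hε, hA2'⟩ := hA2
  set uκ : ℕ → Vec m := fun k => κ (phiX f κ z k) with huκ
  have htr : ∀ k, traj f z uκ k = phiX f κ z k := traj_kappa f κ z
  have hfeas : Feasible f Z Uset j z uκ := by
    intro k _
    refine ⟨hκU _, ?_⟩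
    rw [htr k]
    exact (hA2' z hz k).2
  have hle : Vmpc f κ ℓ Z Uset j M z ≤ Jcost f κ ℓ Z j M z uκ := iInf₂_le uκ hfeas
  refine hle.trans ?_
  have hVt : Vtail f κ ℓ Z M (traj f z uκ j) =
      ENNReal.ofReal (∑ k ∈ Finset.range M, ℓ (phiX f κ z (j + k)) (κ (phiX f κ z (j + k)))) := by
    rw [htr j, Vtail, if_pos]
    · congr 1
      refine Finset.sum_congr rfl (fun k _ => ?_)
      rw [phiX_add]
    · intro k _
      rw [phiX_add]
      exact (hA2' z hz (j + k)).2
  rw [Jcost, hVt, ← ENNReal.ofReal_add (Finset.sum_nonneg (fun k _ => hℓ0 _ _))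
    (Finset.sum_nonneg (fun k _ => hℓ0 _ _))]
  apply ENNReal.ofReal_le_ofReal
  have hsum : (∑ k ∈ Finset.range j, ℓ (traj f z uκ k) (uκ k)) +
      ∑ k ∈ Finset.range M, ℓ (phiX f κ z (j + k)) (κ (phiX f κ z (j + k)))
      = ∑ k ∈ Finset.range (j + M), ℓ (phiX f κ z k) (κ (phiX f κ z k)) := by
    rw [Finset.sum_range_add (fun k => ℓ (phiX f κ z k) (κ (phiX f κ z k))) j M]
    congr 1
    refine Finset.sum_congr rfl (fun k _ => ?_)
    rw [htr k]
  rw [hsum]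
  have hlm0 : 0 ≤ lmin ℓ Uset z := lmin_nonneg ℓ Uset hℓ0 z
  calc ∑ k ∈ Finset.range (j + M), ℓ (phiX f κ z k) (κ (phiX f κ z k))
      ≤ ∑ k ∈ Finset.range (j + M), C * ρ ^ k * lmin ℓ Uset z :=
        Finset.sum_le_sum (fun k _ => (hA2' z hz k).1)
    _ = (∑ k ∈ Finset.range (j + M), ρ ^ k) * (C * lmin ℓ Uset z) := by
        rw [Finset.sum_mul]; refine Finset.sum_congr rfl (fun k _ => by ring)
    _ ≤ (1 / (1 - ρ)) * (C * lmin ℓ Uset z) := by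
        apply mul_le_mul_of_nonneg_right (geom_sum_le_inv_one_sub hρ0 hρ1 _)
        exact mul_nonneg (by linarith) hlm0
    _ = C / (1 - ρ) * lmin ℓ Uset z := by ring

/-- Dynamic programming inequality: prefix of a feasible sequence plus value-to-go. -/
lemma vmpc_concat (f : Vec n → Vec m → Vec n) (κ : Vec n → Vec m)
    (ℓ : Vec n → Vec m → ℝ) (Z : Set (Vec n × Vec m)) (Uset : Set (Vec m))
    (hℓ0 : ∀ x u, 0 ≤ ℓ x u)
    (N M k : ℕ) (hk : k ≤ N) (x : Vec n) (u : ℕ → Vec m)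
    (hu : ∀ j < k, u j ∈ Uset ∧ (traj f x u j, u j) ∈ Z) :
    Vmpc f κ ℓ Z Uset N M x ≤
      ENNReal.ofReal (∑ j ∈ Finset.range k, ℓ (traj f x u j) (u j)) +
        Vmpc f κ ℓ Z Uset (N - k) M (traj f x u k) := by
  set c := ∑ j ∈ Finset.range k, ℓ (traj f x u j) (u j) with hc
  set z := traj f x u k with hz
  have key : ∀ v : ℕ → Vec m, Feasible f Z Uset (N - k) z v →
      Vmpc f κ ℓ Z Uset N M x ≤ ENNReal.ofReal c + Jcost f κ ℓ Z (N - k) M z v := by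
    intro v hv
    set w : ℕ → Vec m := fun i => if i < k then u i else v (i - k) with hw
    have hNk : k + (N - k) = N := Nat.add_sub_cancel' hk
    have hwleft : ∀ j ≤ k, traj f x w j = traj f x u j := fun j hj =>
      traj_concat_left f x u v k j hj
    have hwright : ∀ j, traj f x w (k + j) = traj f z v j := fun j =>
      traj_concat_right f x u v k j
    have hwv : ∀ j, w (k + j) = v j := by
      intro j
      show (if k + j < k then u (k + j) else v (k + j - k)) = v j
      rw [if_neg (by omega : ¬ (k + j < k)), Nat.add_sub_cancel_left]
    have hfw : Feasible f Z Uset N x w := by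
      intro i hiN
      by_cases hik : i < k
      · have h1 : w i = u i := if_pos hik
        have h2 : traj f x w i = traj f x u i := hwleft i (le_of_lt hik)
        rw [h1, h2]
        exact hu i hik
      · push_neg at hik
        obtain ⟨j, rfl⟩ := Nat.exists_eq_add_of_le hik
        have hjlt : j < N - k := by omega
        rw [hwv j, hwright j]
        exact hv j hjlt
    have hJw : Jcost f κ ℓ Z N M x w = ENNReal.ofReal c + Jcost f κ ℓ Z (N - k) M z v := by
      rw [Jcost, Jcost]
      have hsum : ∑ i ∈ Finset.range N, ℓ (traj f x w i) (w i) =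
          c + ∑ i ∈ Finset.range (N - k), ℓ (traj f z v i) (v i) := by
        have hsum0 := Finset.sum_range_add (fun i => ℓ (traj f x w i) (w i)) k (N - k)
        rw [hNk] at hsum0
        rw [hsum0]
        congr 1
        · refine Finset.sum_congr rfl (fun i hi => ?_)
          have hik : i < k := Finset.mem_range.mp hi
          rw [hwleft i (le_of_lt hik)]
          congr 1
          exact if_pos hik
        · refine Finset.sum_congr rfl (fun i _ => ?_)
          rw [hwright i, hwv i]
      have hterm : traj f x w N = traj f z v (N - k) := by
        rw [← hwright (N - k), hNk]
      rw [hsum, hterm, ENNReal.ofReal_add (by exact Finset.sum_nonneg fun j _ => hℓ0 _ _)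
        (Finset.sum_nonneg fun j _ => hℓ0 _ _), add_assoc]
    calc Vmpc f κ ℓ Z Uset N M x ≤ Jcost f κ ℓ Z N M x w := iInf₂_le w hfw
      _ = ENNReal.ofReal c + Jcost f κ ℓ Z (N - k) M z v := hJw
  have hrw : ENNReal.ofReal c + Vmpc f κ ℓ Z Uset (N - k) M z =
      ⨅ (v : ℕ → Vec m) (_ : Feasible f Z Uset (N - k) z v),
        (ENNReal.ofReal c + Jcost f κ ℓ Z (N - k) M z v) := by
    rw [Vmpc, ENNReal.add_iInf]
    exact iInf_congr fun v => ENNReal.add_iInf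
  rw [hrw]
  exact le_iInf₂ key

end MPCAux

set_option maxHeartbeats 1000000

/-- Theorem 1, value-function decrease: under Assumptions 1 and 2 with
`ρ > 0` and `γ = C/(1-ρ) > 1`, for every `N > N_M` and every `x` with `V_{N,M}(x) ≤ V̄`,
any minimizing input sequence `u*` satisfies
`V_{N,M}(f(x,u*(0))) ≤ V_{N,M}(x) - ε_{N,M} ℓ(x,u*(0))` with
`ε_{N,M} = 1 - C² ρ_γ^(N-N₀) ρ^M/(1-ρ^M) ∈ (0,1]`. -/
theorem value_function_decrease {n m : ℕ}
    (f : Vec n → Vec m → Vec n) (κ : Vec n → Vec m) (ℓ : Vec n → Vec m → ℝ)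
    (Z : Set (Vec n × Vec m)) (Uset : Set (Vec m)) (ρ C ε : ℝ)
    (hf : Continuous fun p : Vec n × Vec m => f p.1 p.2) (hf0 : f 0 0 = 0)
    (hℓ : Continuous fun p : Vec n × Vec m => ℓ p.1 p.2) (hℓ0 : ∀ x u, 0 ≤ ℓ x u)
    (hZ0 : ((0 : Vec n), (0 : Vec m)) ∈ interior Z) (hU : IsCompact Uset)
    (hκ : Continuous κ) (hκU : ∀ x, κ x ∈ Uset)
    (αlow αup : ℝ → ℝ) (hαlow : IsKInfty αlow) (hαup : IsKInfty αup)
    (hA1 : ∀ x : Vec n, αlow ‖x‖ ≤ lmin ℓ Uset x ∧ lmin ℓ Uset x ≤ αup ‖x‖)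
    (hℓ00 : ℓ 0 0 = 0)
    (hA2 : Assumption2 f κ ℓ Z Uset ρ C ε) (hρpos : 0 < ρ)
    (Vbar γ ργ γlow NM : ℝ) (hVbar : 0 < Vbar) (hγ : γ = C / (1 - ρ)) (hγ1 : 1 < γ)
    (hργ : ργ = (γ - 1) / γ) (hγlow : γlow = min γ (Vbar / ε))
    (N₀ : ℕ) (hN₀ : N₀ = ⌈max 0 ((Vbar - γ * ε) / ε)⌉₊)
    (M : ℕ) (hM : 1 ≤ M)
    (hNM : NM = N₀ + max (Real.log γlow)
        (max (Real.log (C ^ 2 * ρ ^ M / (1 - ρ ^ M))) 0) /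
        (Real.log γ - Real.log (γ - 1)))
    (N : ℕ) (hN : NM < N) (εNM : ℝ)
    (hεNM : εNM = 1 - C ^ 2 * ργ ^ (N - N₀) * ρ ^ M / (1 - ρ ^ M)) :
    εNM ∈ Set.Ioc (0 : ℝ) 1 ∧
    ∀ x : Vec n, Vmpc f κ ℓ Z Uset N M x ≤ ENNReal.ofReal Vbar →
      ∀ u : ℕ → Vec m, IsMinimizer f κ ℓ Z Uset N M x u →
        Vmpc f κ ℓ Z Uset N M (f x (u 0)) + ENNReal.ofReal (εNM * ℓ x (u 0)) ≤
          Vmpc f κ ℓ Z Uset N M x := by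
  have hA2c := hA2
  obtain ⟨⟨hρ0, hρ1⟩, hC, hε, hA2'⟩ := hA2c
  -- basic positivity facts
  have hγpos : 0 < γ := lt_trans one_pos hγ1
  have hγ1' : 0 < γ - 1 := by linarith
  have hργpos : 0 < ργ := by rw [hργ]; exact div_pos hγ1' hγpos
  have hργlt1 : ργ < 1 := by rw [hργ]; rw [div_lt_one hγpos]; linarith
  have hΔ : 0 < Real.log γ - Real.log (γ - 1) :=
    sub_pos.mpr (Real.log_lt_log hγ1' (by linarith))
  set Δr := Real.log γ - Real.log (γ - 1) with hΔr
  have hρM1 : ρ ^ M < 1 := pow_lt_one₀ (le_of_lt hρpos) hρ1 (by omega)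
  have hρMpos : 0 < ρ ^ M := pow_pos hρpos M
  set Bv := C ^ 2 * ρ ^ M / (1 - ρ ^ M) with hBv
  have hBpos : 0 < Bv := by
    apply div_pos (mul_pos (by positivity) hρMpos) (by linarith)
  have hγlowpos : 0 < γlow := by
    rw [hγlow]; exact lt_min hγpos (div_pos hVbar hε)
  -- consequences of N > NM
  have hmax0 : 0 ≤ max (Real.log γlow) (max (Real.log Bv) 0) :=
    le_max_of_le_right (le_max_right _ _)
  rw [hNM] at hN
  have hN₀ltN : (N₀ : ℝ) < N :=
    lt_of_le_of_lt (le_add_of_nonneg_right (div_nonneg hmax0 hΔ.le)) hN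
  have hN₀leN : N₀ ≤ N := by exact_mod_cast hN₀ltN.le
  have hN₀ltN' : N₀ < N := by exact_mod_cast hN₀ltN
  set t := N - N₀ with ht
  have htcast : (t : ℝ) = (N : ℝ) - N₀ := by
    rw [ht]; exact Nat.cast_sub hN₀leN
  have hjΔ : max (Real.log γlow) (max (Real.log Bv) 0) < (t : ℝ) * Δr := by
    rw [htcast]
    have h1 : max (Real.log γlow) (max (Real.log Bv) 0) / Δr < (N : ℝ) - N₀ := by
      linarith
    calc max (Real.log γlow) (max (Real.log Bv) 0)
        = max (Real.log γlow) (max (Real.log Bv) 0) / Δr * Δr := by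
          field_simp
      _ < ((N : ℝ) - N₀) * Δr := by
          exact mul_lt_mul_of_pos_right h1 hΔ
  -- exponential form of ργ ^ t
  have hlogργ : Real.log ργ = -Δr := by
    rw [hργ, Real.log_div (ne_of_gt hγ1') (ne_of_gt hγpos), hΔr]; ring
  have hργt : ∀ s : ℕ, ργ ^ s = Real.exp (-(s * Δr)) := by
    intro s
    rw [← Real.exp_log hργpos, ← Real.exp_nat_mul, hlogργ]
    ring_nf
  have hBργt : Bv * ργ ^ t < 1 := by
    have h1 : Bv * ργ ^ t = Real.exp (Real.log Bv + -(t * Δr)) := by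
      rw [Real.exp_add, hργt t, Real.exp_log hBpos]
    have h2 : Real.log Bv + -((t : ℝ) * Δr) < 0 := by
      have : Real.log Bv ≤ max (Real.log γlow) (max (Real.log Bv) 0) :=
        le_max_of_le_right (le_max_left _ _)
      linarith
    rw [h1, ← Real.exp_zero]
    exact Real.exp_lt_exp.mpr h2
  have hγlowργt : ργ ^ t * γlow ≤ 1 := by
    have h1 : ργ ^ t * γlow = Real.exp (-(t * Δr) + Real.log γlow) := by
      rw [Real.exp_add, hργt t, Real.exp_log hγlowpos]
    have h2 : -((t : ℝ) * Δr) + Real.log γlow ≤ 0 := by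
      have : Real.log γlow ≤ max (Real.log γlow) (max (Real.log Bv) 0) := le_max_left _ _
      linarith
    rw [h1, ← Real.exp_zero]
    exact Real.exp_le_exp.mpr h2
  have hεNM_eq : 1 - εNM = Bv * ργ ^ t := by
    rw [hεNM, hBv, ht]; ring
  have hεNMpos : 0 < εNM := by
    have := hBργt; linarith [hεNM_eq]
  have hεNM1 : εNM ≤ 1 := by
    have h0 : 0 ≤ Bv * ργ ^ t := mul_nonneg hBpos.le (pow_nonneg hργpos.le t)
    linarith [hεNM_eq]
  refine ⟨⟨hεNMpos, hεNM1⟩, ?_⟩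
  -- main part
  intro x hVx u hu
  obtain ⟨hufeas, huopt⟩ := hu
  have hN1 : 1 ≤ N := by omega
  set L : ℕ → ℝ := fun k => ℓ (traj f x u k) (u k) with hLdef
  set y := traj f x u N with hy0
  set G : ℕ → ℝ := fun k => ℓ (phiX f κ y k) (κ (phiX f κ y k)) with hGdef
  have hLnn : ∀ k, 0 ≤ L k := fun k => hℓ0 _ _
  have hGnn : ∀ k, 0 ≤ G k := fun k => hℓ0 _ _
  have hJle : Jcost f κ ℓ Z N M x u ≤ ENNReal.ofReal Vbar := huopt ▸ hVx
  -- finiteness of the tail at y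
  have hVt_ne : Vtail f κ ℓ Z M y ≠ ⊤ := by
    intro h
    rw [Jcost, ← hy0, h, add_top] at hJle
    exact ENNReal.ofReal_ne_top (top_le_iff.mp hJle)
  have hZy : ∀ k < M, (phiX f κ y k, κ (phiX f κ y k)) ∈ Z := by
    by_contra h
    exact hVt_ne (by rw [Vtail, if_neg h])
  set T := ∑ k ∈ Finset.range M, G k with hTdef
  have hVty : Vtail f κ ℓ Z M y = ENNReal.ofReal T := by
    rw [Vtail, if_pos hZy]
  have hTnn : 0 ≤ T := Finset.sum_nonneg fun k _ => hGnn k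
  set Vreal := (∑ k ∈ Finset.range N, L k) + T with hVrealdef
  have hVrealnn : 0 ≤ Vreal :=
    add_nonneg (Finset.sum_nonneg fun k _ => hLnn k) hTnn
  have hVx_eq : Vmpc f κ ℓ Z Uset N M x = ENNReal.ofReal Vreal := by
    rw [huopt, Jcost, ← hy0, hVty,
      ← ENNReal.ofReal_add (Finset.sum_nonneg fun k _ => hLnn k) hTnn]
  have hVreal_le : Vreal ≤ Vbar := by
    rw [hVx_eq] at hVx
    exact (ENNReal.ofReal_le_ofReal_iff hVbar.le).mp hVx
  -- the cost-to-go sequence S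
  set S : ℕ → ℝ := fun k => (∑ j ∈ Finset.Ico k N, L j) + T with hSdef
  have hSsplit : ∀ k ≤ N, (∑ j ∈ Finset.range k, L j) + S k = Vreal := by
    intro k hk
    rw [hSdef]
    simp only
    rw [hVrealdef, Finset.range_eq_Ico, ← add_assoc,
      Finset.sum_Ico_consecutive L (Nat.zero_le k) hk]
    rw [Finset.range_eq_Ico]
  have hSsucc : ∀ k < N, S (k + 1) = S k - L k := by
    intro k hk
    rw [hSdef]
    simp only
    rw [Finset.sum_eq_sum_Ico_succ_bot hk L]
    ring
  have hSnn : ∀ k, 0 ≤ S k :=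
    fun k => add_nonneg (Finset.sum_nonneg fun j _ => hLnn j) hTnn
  have hSN : S N = T := by
    rw [hSdef]; simp
  have hSle : ∀ k ≤ N, S k ≤ Vreal := by
    intro k hk
    have := hSsplit k hk
    have h0 : 0 ≤ ∑ j ∈ Finset.range k, L j := Finset.sum_nonneg fun j _ => hLnn j
    linarith
  -- key value bound
  have hkey : ∀ k ≤ N, lmin ℓ Uset (traj f x u k) ≤ ε →
      S k ≤ γ * lmin ℓ Uset (traj f x u k) := by
    intro k hkN hlk
    have hlmnn : 0 ≤ lmin ℓ Uset (traj f x u k) := lmin_nonneg ℓ Uset hℓ0 _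
    have h1 := vmpc_concat f κ ℓ Z Uset hℓ0 N M k hkN x u
      (fun j hj => hufeas j (lt_of_lt_of_le hj hkN))
    have h2 := vmpc_le_gamma_lmin f κ ℓ Z Uset hA2 hκU hℓ0 (traj f x u k) hlk (N - k) M
    have hcnn : 0 ≤ C / (1 - ρ) * lmin ℓ Uset (traj f x u k) :=
      mul_nonneg (div_nonneg (by linarith) (by linarith)) hlmnn
    have h3 : Vmpc f κ ℓ Z Uset N M x ≤
        ENNReal.ofReal ((∑ j ∈ Finset.range k, L j) +
          C / (1 - ρ) * lmin ℓ Uset (traj f x u k)) := by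
      rw [ENNReal.ofReal_add (Finset.sum_nonneg fun j _ => hLnn j) hcnn]
      exact h1.trans (add_le_add_right h2 _)
    rw [hVx_eq] at h3
    have h4 := (ENNReal.ofReal_le_ofReal_iff
      (add_nonneg (Finset.sum_nonneg fun j _ => hLnn j) hcnn)).mp h3
    have h6 : S k = Vreal - ∑ j ∈ Finset.range k, L j := eq_sub_of_add_eq' (hSsplit k hkN)
    rw [hγ, h6, sub_le_iff_le_add']
    exact h4
  have hεL0 : lmin ℓ Uset x ≤ L 0 := lmin_le ℓ Uset hℓ0 (hufeas 0 hN1).1 x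
  -- existence of a good k₀
  have hγlowε : γlow * ε = min (γ * ε) Vbar := by
    rw [hγlow]
    have hd : Vbar / ε * ε = Vbar := div_mul_cancel₀ Vbar (ne_of_gt hε)
    rcases le_total γ (Vbar / ε) with h | h
    · have h1 : γ * ε ≤ Vbar := by
        have := mul_le_mul_of_nonneg_right h hε.le
        linarith
      rw [min_eq_left h, min_eq_left h1]
    · have h1 : Vbar ≤ γ * ε := by
        have := mul_le_mul_of_nonneg_right h hε.le
        linarith
      rw [min_eq_right h, min_eq_right h1, hd]
  obtain ⟨k₀, hk₀N₀, hSk₀ε, hSk₀L0⟩ :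
      ∃ k₀, k₀ ≤ N₀ ∧ S k₀ ≤ γlow * ε ∧ S k₀ ≤ γ * L 0 := by
    by_cases hex : ∃ k, k ≤ N₀ ∧ lmin ℓ Uset (traj f x u k) ≤ ε
    · obtain ⟨k₀, ⟨hk₀N₀, hk₀ε⟩, hk₀min⟩ :
          ∃ k₀, (k₀ ≤ N₀ ∧ lmin ℓ Uset (traj f x u k₀) ≤ ε) ∧
            ∀ j < k₀, ¬(j ≤ N₀ ∧ lmin ℓ Uset (traj f x u j) ≤ ε) :=
        ⟨Nat.find hex, Nat.find_spec hex, fun j hj => Nat.find_min hex hj⟩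
      have hSk : S k₀ ≤ γ * lmin ℓ Uset (traj f x u k₀) :=
        hkey k₀ (le_trans hk₀N₀ hN₀leN) hk₀ε
      have hSγε : S k₀ ≤ γ * ε :=
        hSk.trans (mul_le_mul_of_nonneg_left hk₀ε hγpos.le)
      refine ⟨k₀, hk₀N₀, ?_, ?_⟩
      · rw [hγlowε]
        exact le_min hSγε ((hSle k₀ (le_trans hk₀N₀ hN₀leN)).trans hVreal_le)
      · rcases Nat.eq_zero_or_pos k₀ with h0 | h0
        · subst h0
          refine hSk.trans (mul_le_mul_of_nonneg_left ?_ hγpos.le)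
          exact hεL0
        · have hmin := hk₀min 0 h0
          push_neg at hmin
          have h1 : ε < lmin ℓ Uset (traj f x u 0) := hmin (Nat.zero_le N₀)
          have h2 : ε < L 0 := lt_of_lt_of_le h1 hεL0
          exact hSγε.trans (mul_le_mul_of_nonneg_left h2.le hγpos.le)
    · push_neg at hex
      have hεL : ∀ k < N₀, ε ≤ L k := by
        intro k hk
        have h1 := hex k (le_of_lt hk)
        have h2 : lmin ℓ Uset (traj f x u k) ≤ L k :=
          lmin_le ℓ Uset hℓ0 (hufeas k (lt_of_lt_of_le hk hN₀leN)).1 _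
        linarith
      have hsumN₀ : (N₀ : ℝ) * ε ≤ ∑ j ∈ Finset.range N₀, L j := by
        calc (N₀ : ℝ) * ε = ∑ _j ∈ Finset.range N₀, ε := by
              rw [Finset.sum_const, Finset.card_range, nsmul_eq_mul]
          _ ≤ ∑ j ∈ Finset.range N₀, L j :=
              Finset.sum_le_sum fun j hj => hεL j (Finset.mem_range.mp hj)
      have hSN₀ : S N₀ ≤ Vbar - N₀ * ε := by
        have := hSsplit N₀ hN₀leN
        linarith
      have hceil : (Vbar - γ * ε) / ε ≤ (N₀ : ℝ) := by
        rw [hN₀]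
        exact le_trans (le_max_right _ _) (Nat.le_ceil _)
      have hVγε : Vbar - (N₀ : ℝ) * ε ≤ γ * ε := by
        have h1 : Vbar - γ * ε ≤ (N₀ : ℝ) * ε := by
          rw [div_le_iff₀ hε] at hceil
          linarith only [hceil]
        linarith only [h1]
      have hL0 : ε < L 0 := by
        have h1 := hex 0 (Nat.zero_le N₀)
        have h2 : lmin ℓ Uset (traj f x u 0) ≤ L 0 := hεL0
        linarith only [h1, h2]
      refine ⟨N₀, le_rfl, ?_, ?_⟩
      · rw [hγlowε]
        exact le_min (by linarith only [hSN₀, hVγε]) ((hSle N₀ hN₀leN).trans hVreal_le)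
      · have h2 : γ * ε ≤ γ * L 0 := mul_le_mul_of_nonneg_left hL0.le hγpos.le
        linarith only [hSN₀, hVγε, h2]
  -- decay of S
  have hSk₀γε : S k₀ ≤ γ * ε := by
    have h1 : γlow ≤ γ := by rw [hγlow]; exact min_le_left _ _
    have h2 : γlow * ε ≤ γ * ε := mul_le_mul_of_nonneg_right h1 hε.le
    linarith only [hSk₀ε, h2]
  have hdecay : ∀ i, k₀ + i ≤ N → S (k₀ + i) ≤ ργ ^ i * S k₀ := by
    intro i
    induction i with
    | zero => intro _; simp
    | succ i ih =>
        intro hle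
        have hik : k₀ + i < N := by omega
        have hSi := ih (by omega)
        have hLi : S (k₀ + i) / γ ≤ L (k₀ + i) := by
          by_cases hP : lmin ℓ Uset (traj f x u (k₀ + i)) ≤ ε
          · have h1 := hkey (k₀ + i) hik.le hP
            have h2 : lmin ℓ Uset (traj f x u (k₀ + i)) ≤ L (k₀ + i) :=
              lmin_le ℓ Uset hℓ0 (hufeas _ hik).1 _
            rw [div_le_iff₀ hγpos]
            have h3 : γ * lmin ℓ Uset (traj f x u (k₀ + i)) ≤ γ * L (k₀ + i) :=
              mul_le_mul_of_nonneg_left h2 hγpos.le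
            linarith only [h1, h3]
          · push_neg at hP
            have h2 : lmin ℓ Uset (traj f x u (k₀ + i)) ≤ L (k₀ + i) :=
              lmin_le ℓ Uset hℓ0 (hufeas _ hik).1 _
            have hSle2 : S (k₀ + i) ≤ γ * ε := by
              have hpow1 : ργ ^ i ≤ 1 := pow_le_one₀ hργpos.le hργlt1.le
              have h3 : ργ ^ i * S k₀ ≤ 1 * S k₀ :=
                mul_le_mul_of_nonneg_right hpow1 (hSnn k₀)
              linarith only [hSi, h3, hSk₀γε]
            rw [div_le_iff₀ hγpos]
            have h4 : γ * ε ≤ γ * L (k₀ + i) :=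
              mul_le_mul_of_nonneg_left (by linarith only [hP, h2]) hγpos.le
            linarith only [hSle2, h4]
        have hstep : S (k₀ + (i + 1)) = S (k₀ + i) - L (k₀ + i) := hSsucc _ hik
        have hfrac : ργ * S (k₀ + i) = S (k₀ + i) - S (k₀ + i) / γ := by
          rw [hργ]; field_simp
        have h3 : S (k₀ + (i + 1)) ≤ ργ * S (k₀ + i) := by
          rw [hstep, hfrac]
          exact sub_le_sub_left hLi _
        have h4 : ργ * S (k₀ + i) ≤ ργ * (ργ ^ i * S k₀) :=
          mul_le_mul_of_nonneg_left hSi hργpos.le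
        calc S (k₀ + (i + 1)) ≤ ργ * (ργ ^ i * S k₀) := le_trans h3 h4
          _ = ργ ^ (i + 1) * S k₀ := by ring
  -- bounds on the tail T
  have hk₀N : k₀ ≤ N := le_trans hk₀N₀ hN₀leN
  have hTSk₀ : T ≤ ργ ^ t * S k₀ := by
    have h1 := hdecay (N - k₀) (by omega)
    rw [show k₀ + (N - k₀) = N from by omega] at h1
    rw [hSN] at h1
    have h2 : ργ ^ (N - k₀) ≤ ργ ^ t :=
      pow_le_pow_of_le_one hργpos.le hργlt1.le (by omega)
    calc T ≤ ργ ^ (N - k₀) * S k₀ := h1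
      _ ≤ ργ ^ t * S k₀ := mul_le_mul_of_nonneg_right h2 (hSnn k₀)
  have hTε : T ≤ ε := by
    have h1 : ργ ^ t * S k₀ ≤ ργ ^ t * (γlow * ε) :=
      mul_le_mul_of_nonneg_left hSk₀ε (pow_nonneg hργpos.le t)
    have h2 : ργ ^ t * (γlow * ε) ≤ 1 * ε := by
      have h3 := mul_le_mul_of_nonneg_right hγlowργt hε.le
      linarith only [h3]
    linarith
  have hTL0 : T ≤ ργ ^ t * (γ * L 0) := by
    have h1 : ργ ^ t * S k₀ ≤ ργ ^ t * (γ * L 0) :=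
      mul_le_mul_of_nonneg_left hSk₀L0 (pow_nonneg hργpos.le t)
    linarith
  -- pointwise tail bounds
  have hGkT : ∀ k < M, G k ≤ T :=
    fun k hk => Finset.single_le_sum (fun j _ => hGnn j) (Finset.mem_range.mpr hk)
  have hlmy : lmin ℓ Uset y ≤ ε := by
    have h1 : lmin ℓ Uset y ≤ G 0 := lmin_le ℓ Uset hℓ0 (hκU y) y
    exact h1.trans ((hGkT 0 (by omega)).trans hTε)
  have hzkε : ∀ k < M, lmin ℓ Uset (phiX f κ y k) ≤ ε := by
    intro k hk
    have h1 : lmin ℓ Uset (phiX f κ y k) ≤ G k := lmin_le ℓ Uset hℓ0 (hκU _) _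
    exact h1.trans ((hGkT k hk).trans hTε)
  have hGM : ∀ k < M, ρ ^ k * G M ≤ C * ρ ^ M * G k := by
    intro k hk
    have h1 := (hA2' (phiX f κ y k) (hzkε k hk) (M - k)).1
    rw [phiX_add f κ y k (M - k), show k + (M - k) = M from by omega] at h1
    have h2 : lmin ℓ Uset (phiX f κ y k) ≤ G k := lmin_le ℓ Uset hℓ0 (hκU _) _
    have h3 : ρ ^ k * ρ ^ (M - k) = ρ ^ M := by
      rw [← pow_add]; congr 1; omega
    have hρk : 0 ≤ ρ ^ k := pow_nonneg hρpos.le k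
    have hCρM : 0 ≤ C * ρ ^ M := mul_nonneg (by linarith) hρMpos.le
    calc ρ ^ k * G M ≤ ρ ^ k * (C * ρ ^ (M - k) * lmin ℓ Uset (phiX f κ y k)) :=
          mul_le_mul_of_nonneg_left h1 hρk
      _ = C * ρ ^ M * lmin ℓ Uset (phiX f κ y k) := by rw [← h3]; ring
      _ ≤ C * ρ ^ M * G k := mul_le_mul_of_nonneg_left h2 hCρM
  set σ := ∑ k ∈ Finset.range M, ρ ^ k with hσdef
  have hσsum : G M * σ ≤ C * ρ ^ M * T := by
    rw [hσdef, hTdef, Finset.mul_sum, Finset.mul_sum]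
    exact Finset.sum_le_sum fun k hk => by
      have h1 := hGM k (Finset.mem_range.mp hk); linarith only [h1]
  have hσρ : σ * (1 - ρ) = 1 - ρ ^ M := by
    have h1 := geom_sum_mul ρ M
    rw [hσdef]
    linarith only [h1]
  have hγC : γ * (1 - ρ) = C := by
    rw [hγ]
    exact div_mul_cancel₀ C (ne_of_gt (by linarith : (0:ℝ) < 1 - ρ))
  -- final bound on G M
  have hGMfinal : G M ≤ (1 - εNM) * L 0 := by
    have hkey2 : G M * (1 - ρ ^ M) ≤ C ^ 2 * (ργ ^ t) * ρ ^ M * L 0 := by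
      have h1 : G M * (1 - ρ ^ M) = (G M * σ) * (1 - ρ) := by
        rw [mul_assoc, hσρ]
      have h2 : (G M * σ) * (1 - ρ) ≤ (C * ρ ^ M * T) * (1 - ρ) :=
        mul_le_mul_of_nonneg_right hσsum (by linarith)
      have h3 : (C * ρ ^ M * T) * (1 - ρ) ≤ (C * ρ ^ M * (ργ ^ t * (γ * L 0))) * (1 - ρ) := by
        have hCρ : 0 ≤ C * ρ ^ M := mul_nonneg (by linarith) hρMpos.le
        exact mul_le_mul_of_nonneg_right (mul_le_mul_of_nonneg_left hTL0 hCρ)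
          (by linarith)
      have h4 : (C * ρ ^ M * (ργ ^ t * (γ * L 0))) * (1 - ρ)
          = C ^ 2 * (ργ ^ t) * ρ ^ M * L 0 := by
        rw [← hγC]; ring
      linarith
    have h5 : 1 - εNM = C ^ 2 * (ργ ^ t) * ρ ^ M / (1 - ρ ^ M) := by
      rw [hεNM_eq, hBv]; ring
    rw [h5, div_mul_eq_mul_div, le_div_iff₀ (by linarith : (0:ℝ) < 1 - ρ ^ M)]
    linarith only [hkey2]
  -- the shifted candidate sequence
  set xp := f x (u 0) with hxp
  set ut : ℕ → Vec m := fun k =>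
    if k < N - 1 then u (k + 1) else κ (phiX f κ y (k - (N - 1))) with hut
  have htl : ∀ k ≤ N - 1, traj f xp ut k = traj f x u (k + 1) := by
    intro k hk
    have h1 : traj f xp ut k = traj f xp (fun j => u (j + 1)) k :=
      traj_congr f xp ut (fun j => u (j + 1)) k
        (fun j hj => if_pos (lt_of_lt_of_le hj hk))
    rw [h1, hxp]
    exact traj_shift f x u k
  have hyy : traj f xp ut (N - 1) = y := by
    rw [htl (N - 1) le_rfl, hy0, show N - 1 + 1 = N from by omega]
  have hutN1 : ∀ j, ut ((N - 1) + j) = κ (phiX f κ y j) := by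
    intro j
    show (if (N - 1) + j < N - 1 then _ else κ (phiX f κ y ((N - 1) + j - (N - 1)))) = _
    rw [if_neg (by omega), show (N - 1) + j - (N - 1) = j from by omega]
  have htr2 : ∀ j, traj f xp ut ((N - 1) + j) = phiX f κ y j := by
    intro j
    induction j with
    | zero => exact hyy
    | succ j ih =>
        show f (traj f xp ut ((N - 1) + j)) (ut ((N - 1) + j)) = _
        rw [ih, hutN1 j]
        rfl
  have hfeasc : Feasible f Z Uset N xp ut := by
    intro k hkN
    by_cases hk : k < N - 1
    · have h1 : ut k = u (k + 1) := if_pos hk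
      have h2 := htl k hk.le
      rw [h1, h2]
      exact hufeas (k + 1) (by omega)
    · have hkeq : k = N - 1 := by omega
      subst hkeq
      have h1 : ut (N - 1) = κ y := by
        have := hutN1 0
        rwa [Nat.add_zero] at this
      rw [h1, hyy]
      exact ⟨hκU y, hZy 0 (by omega)⟩
  -- cost of the candidate
  have hterm : traj f xp ut N = phiX f κ y 1 := by
    have := htr2 1
    rwa [show (N - 1) + 1 = N from by omega] at this
  have hZy' : ∀ j : ℕ, (phiX f κ y j, κ (phiX f κ y j)) ∈ Z :=
    fun j => (hA2' y hlmy j).2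
  have hVtc : Vtail f κ ℓ Z M (phiX f κ y 1) =
      ENNReal.ofReal (∑ k ∈ Finset.range M, G (k + 1)) := by
    rw [Vtail, if_pos]
    · congr 1
      refine Finset.sum_congr rfl fun k _ => ?_
      rw [phiX_add f κ y 1 k, hGdef]
      simp only
      rw [show 1 + k = k + 1 from by omega]
    · intro k _
      rw [phiX_add f κ y 1 k]
      exact hZy' (1 + k)
  have hsumc : ∑ k ∈ Finset.range N, ℓ (traj f xp ut k) (ut k)
      = (∑ k ∈ Finset.range (N - 1), L (k + 1)) + ℓ y (κ y) := by
    have hNsplit : N = (N - 1) + 1 := by omega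
    conv_lhs => rw [hNsplit]
    rw [Finset.sum_range_succ]
    congr 1
    · refine Finset.sum_congr rfl fun k hk => ?_
      have hklt : k < N - 1 := Finset.mem_range.mp hk
      have h1 : ut k = u (k + 1) := if_pos hklt
      rw [htl k hklt.le, h1]
    · have h1 : ut (N - 1) = κ y := by
        have := hutN1 0
        rwa [Nat.add_zero] at this
      rw [hyy, h1]
  set Creal := ((∑ k ∈ Finset.range (N - 1), L (k + 1)) + ℓ y (κ y))
      + (∑ k ∈ Finset.range M, G (k + 1)) with hCrealdef
  have hCrealnn : 0 ≤ Creal := by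
    rw [hCrealdef]
    have h1 : (0:ℝ) ≤ ∑ k ∈ Finset.range (N - 1), L (k + 1) :=
      Finset.sum_nonneg fun k _ => hLnn _
    have h2 : (0:ℝ) ≤ ∑ k ∈ Finset.range M, G (k + 1) :=
      Finset.sum_nonneg fun k _ => hGnn _
    have h3 : (0:ℝ) ≤ ℓ y (κ y) := hℓ0 _ _
    linarith
  have hJc : Jcost f κ ℓ Z N M xp ut = ENNReal.ofReal Creal := by
    have ha : 0 ≤ (∑ k ∈ Finset.range (N - 1), L (k + 1)) + ℓ y (κ y) :=
      add_nonneg (Finset.sum_nonneg fun k _ => hLnn _) (hℓ0 _ _)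
    rw [Jcost, hterm, hVtc, hsumc,
      ← ENNReal.ofReal_add ha (Finset.sum_nonneg fun k _ => hGnn _)]
  have hCreal_eq : Creal = Vreal - L 0 + G M := by
    have e1 : ∑ k ∈ Finset.range N, L k = (∑ k ∈ Finset.range (N - 1), L (k + 1)) + L 0 := by
      conv_lhs => rw [show N = (N - 1) + 1 from by omega]
      exact Finset.sum_range_succ' L (N - 1)
    have e2 : (∑ k ∈ Finset.range M, G (k + 1)) + G 0 = T + G M := by
      have h1 := Finset.sum_range_succ' G M
      have h2 := Finset.sum_range_succ G M
      rw [hTdef]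
      linarith
    have e3 : G 0 = ℓ y (κ y) := rfl
    rw [hCrealdef, hVrealdef]
    linarith
  -- conclusion
  have hfin : Creal + εNM * L 0 ≤ Vreal := by
    rw [hCreal_eq]
    linarith only [hGMfinal]
  have hL0x : ℓ x (u 0) = L 0 := rfl
  rw [hL0x, hVx_eq]
  calc Vmpc f κ ℓ Z Uset N M xp + ENNReal.ofReal (εNM * L 0)
      ≤ ENNReal.ofReal Creal + ENNReal.ofReal (εNM * L 0) := by
        apply add_le_add_left
        exact le_trans (iInf₂_le ut hfeasc) (le_of_eq hJc)
    _ = ENNReal.ofReal (Creal + εNM * L 0) :=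
        (ENNReal.ofReal_add hCrealnn (mul_nonneg hεNMpos.le (hLnn 0))).symm
    _ ≤ ENNReal.ofReal Vreal := ENNReal.ofReal_le_ofReal hfin
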